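/- arXiv:math/0506576 — 3 statements merged into one kernel-verified Lean document; each statement's English description precedes it below -/
import Mathlib

section
/- Let U ⊆ (ℂ∖{0})² be open with coordinates (q₁,q₂), and let F, x, y be holomorphic nonvanishing functions on U with Δ = G_{x,1}G_{y,2} − G_{x,2}G_{y,1} nonvanishing and G_{x,1}²G_{y,2}² − G_{y,1}²G_{x,2}² nonvanishing on U. Then on U the identity D_x²F + a₀·D_xD_yF + a₁·D_xF + a₂·D_yF + a₃·F = 0 holds, where a₀ = 2G_{y,1}G_{y,2}/(G_{x,1}G_{y,2} + G_{y,1}G_{x,2}), a₁ = (G_{y,2}²(D_{q₁}G_{x,1} − 2G_{F,1}G_{x,1}) − G_{y,1}²(D_{q₂}G_{x,2} − 2G_{F,2}G_{x,2}))/(G_{x,1}²G_{y,2}² − G_{y,1}²G_{x,2}²), a₂ = (G_{y,2}²(D_{q₁}G_{y,1} − 2G_{F,1}G_{y,1}) − G_{y,1}²(D_{q₂}G_{y,2} − 2G_{F,2}G_{y,2}))/(G_{x,1}²G_{y,2}² − G_{y,1}²G_{x,2}²), and a₃ = −(G_{y,2}²(D_{q₁}G_{F,1} − G_{F,1}²)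 − G_{y,1}²(D_{q₂}G_{F,2} − G_{F,2}²))/(G_{x,1}²G_{y,2}² − G_{y,1}²G_{x,2}²). -/
/- STATEMENT 0: the first partial differential equation (in `x`) satisfied by a
modular form `F` of two variables, expressed via the chain-rule operators. -/

open Complex

/-- `D_{q₁}t = q₁ ∂t/∂q₁` for a function `t` of `(q₁, q₂)`. -/
noncomputable def Dq1 (f : ℂ × ℂ → ℂ) : ℂ × ℂ → ℂ :=
  fun p => p.1 * deriv (fun z => f (z, p.2)) p.1

/-- `D_{q₂}t = q₂ ∂t/∂q₂` for a function `t` of `(q₁, q₂)`. -/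
noncomputable def Dq2 (f : ℂ × ℂ → ℂ) : ℂ × ℂ → ℂ :=
  fun p => p.2 * deriv (fun z => f (p.1, z)) p.2

/-- `G_{t,1} = D_{q₁}t / t`. -/
noncomputable def G1 (f : ℂ × ℂ → ℂ) : ℂ × ℂ → ℂ := fun p => Dq1 f p / f p

/-- `G_{t,2} = D_{q₂}t / t`. -/
noncomputable def G2 (f : ℂ × ℂ → ℂ) : ℂ × ℂ → ℂ := fun p => Dq2 f p / f p

/-- `Δ = G_{x,1}G_{y,2} − G_{x,2}G_{y,1}`. -/
noncomputable def Del (x y : ℂ × ℂ → ℂ) : ℂ × ℂ → ℂ :=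
  fun p => G1 x p * G2 y p - G2 x p * G1 y p

/-- `Δ_x = G_{F,1}G_{y,2} − G_{F,2}G_{y,1}`. -/
noncomputable def DelX (F y : ℂ × ℂ → ℂ) : ℂ × ℂ → ℂ :=
  fun p => G1 F p * G2 y p - G2 F p * G1 y p

/-- `Δ_y = −G_{x,2}G_{F,1} + G_{x,1}G_{F,2}`. -/
noncomputable def DelY (F x : ℂ × ℂ → ℂ) : ℂ × ℂ → ℂ :=
  fun p => -(G2 x p * G1 F p) + G1 x p * G2 F p

/-- `Δ_x/Δ`. -/
noncomputable def RX (F x y : ℂ × ℂ → ℂ) : ℂ × ℂ → ℂ :=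
  fun p => DelX F y p / Del x y p

/-- `Δ_y/Δ`. -/
noncomputable def RY (F x y : ℂ × ℂ → ℂ) : ℂ × ℂ → ℂ :=
  fun p => DelY F x p / Del x y p

/-- `D_xF = F·Δ_x/Δ`. -/
noncomputable def DX (F x y : ℂ × ℂ → ℂ) : ℂ × ℂ → ℂ :=
  fun p => F p * DelX F y p / Del x y p

/-- `D_yF = F·Δ_y/Δ`. -/
noncomputable def DY (F x y : ℂ × ℂ → ℂ) : ℂ × ℂ → ℂ :=
  fun p => F p * DelY F x p / Del x y p

/-- `D_x²F = F·Δ_x²/Δ² + (F/Δ)(G_{y,2}·D_{q₁}(Δ_x/Δ) − G_{y,1}·D_{q₂}(Δ_x/Δ))`. -/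
noncomputable def DXX (F x y : ℂ × ℂ → ℂ) : ℂ × ℂ → ℂ :=
  fun p => F p * (DelX F y p) ^ 2 / (Del x y p) ^ 2 +
    F p / Del x y p *
      (G2 y p * Dq1 (RX F x y) p - G1 y p * Dq2 (RX F x y) p)

/-- `D_xD_yF = F·Δ_xΔ_y/Δ² + (F/Δ)(−G_{x,2}·D_{q₁}(Δ_x/Δ) + G_{x,1}·D_{q₂}(Δ_x/Δ))`. -/
noncomputable def DXY (F x y : ℂ × ℂ → ℂ) : ℂ × ℂ → ℂ :=
  fun p => F p * DelX F y p * DelY F x p / (Del x y p) ^ 2 +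
    F p / Del x y p *
      (-(G2 x p) * Dq1 (RX F x y) p + G1 x p * Dq2 (RX F x y) p)

lemma slice1_hasDerivAt {g : ℂ × ℂ → ℂ} {q : ℂ × ℂ} {g' : ℂ × ℂ →L[ℂ] ℂ}
    (h : HasFDerivAt g g' q) :
    HasDerivAt (fun z => g (z, q.2)) (g' (1, 0)) q.1 := by
  have h2 : HasDerivAt (fun z : ℂ => ((z, q.2) : ℂ × ℂ)) ((1 : ℂ), (0 : ℂ)) q.1 :=
    (hasDerivAt_id q.1).prodMk (hasDerivAt_const _ _)
  have h' : HasFDerivAt g g' (q.1, q.2) := by rw [Prod.mk.eta]; exact h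
  exact h'.comp_hasDerivAt q.1 h2

lemma slice2_hasDerivAt {g : ℂ × ℂ → ℂ} {q : ℂ × ℂ} {g' : ℂ × ℂ →L[ℂ] ℂ}
    (h : HasFDerivAt g g' q) :
    HasDerivAt (fun w => g (q.1, w)) (g' (0, 1)) q.2 := by
  have h2 : HasDerivAt (fun w : ℂ => ((q.1, w) : ℂ × ℂ)) ((0 : ℂ), (1 : ℂ)) q.2 :=
    (hasDerivAt_const _ _).prodMk (hasDerivAt_id q.2)
  have h' : HasFDerivAt g g' (q.1, q.2) := by rw [Prod.mk.eta]; exact h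
  exact h'.comp_hasDerivAt q.2 h2

lemma dq1_eq_fderiv {t : ℂ × ℂ → ℂ} {q : ℂ × ℂ} (ht : DifferentiableAt ℂ t q) :
    Dq1 t q = q.1 * fderiv ℂ t q (1, 0) := by
  rw [Dq1, (slice1_hasDerivAt ht.hasFDerivAt).deriv]

lemma dq2_eq_fderiv {t : ℂ × ℂ → ℂ} {q : ℂ × ℂ} (ht : DifferentiableAt ℂ t q) :
    Dq2 t q = q.2 * fderiv ℂ t q (0, 1) := by
  rw [Dq2, (slice2_hasDerivAt ht.hasFDerivAt).deriv]

lemma fderiv_apply_analyticAt {t : ℂ × ℂ → ℂ} {p : ℂ × ℂ} (ht : AnalyticAt ℂ t p) (v : ℂ × ℂ) :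
    AnalyticAt ℂ (fun q => fderiv ℂ t q v) p :=
  ((ContinuousLinearMap.apply ℂ ℂ v).analyticAt _).comp ht.fderiv

lemma dq1_analyticAt {t : ℂ × ℂ → ℂ} {U : Set (ℂ × ℂ)} {p : ℂ × ℂ}
    (hUopen : IsOpen U) (hp : p ∈ U) (ht : AnalyticOnNhd ℂ t U) :
    AnalyticAt ℂ (Dq1 t) p := by
  have h1 : AnalyticAt ℂ (fun q : ℂ × ℂ => q.1 * fderiv ℂ t q (1, 0)) p :=
    analyticAt_fst.mul (fderiv_apply_analyticAt (ht p hp) _)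
  refine h1.congr ?_
  filter_upwards [hUopen.mem_nhds hp] with q hq
  exact (dq1_eq_fderiv (ht q hq).differentiableAt).symm

lemma dq2_analyticAt {t : ℂ × ℂ → ℂ} {U : Set (ℂ × ℂ)} {p : ℂ × ℂ}
    (hUopen : IsOpen U) (hp : p ∈ U) (ht : AnalyticOnNhd ℂ t U) :
    AnalyticAt ℂ (Dq2 t) p := by
  have h1 : AnalyticAt ℂ (fun q : ℂ × ℂ => q.2 * fderiv ℂ t q (0, 1)) p :=
    analyticAt_snd.mul (fderiv_apply_analyticAt (ht p hp) _)
  refine h1.congr ?_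
  filter_upwards [hUopen.mem_nhds hp] with q hq
  exact (dq2_eq_fderiv (ht q hq).differentiableAt).symm

lemma g1_analyticAt {t : ℂ × ℂ → ℂ} {U : Set (ℂ × ℂ)} {p : ℂ × ℂ}
    (hUopen : IsOpen U) (hp : p ∈ U) (ht : AnalyticOnNhd ℂ t U) (htne : t p ≠ 0) :
    AnalyticAt ℂ (G1 t) p :=
  (dq1_analyticAt hUopen hp ht).div (ht p hp) htne

lemma g2_analyticAt {t : ℂ × ℂ → ℂ} {U : Set (ℂ × ℂ)} {p : ℂ × ℂ}
    (hUopen : IsOpen U) (hp : p ∈ U) (ht : AnalyticOnNhd ℂ t U) (htne : t p ≠ 0) :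
    AnalyticAt ℂ (G2 t) p :=
  (dq2_analyticAt hUopen hp ht).div (ht p hp) htne

/-- slice derivative of an analytic function, expressed via `Dq1`. -/
lemma slice1_G {g : ℂ × ℂ → ℂ} {p : ℂ × ℂ} (hg : AnalyticAt ℂ g p) (hp1 : p.1 ≠ 0) :
    HasDerivAt (fun z => g (z, p.2)) (Dq1 g p / p.1) p.1 := by
  have h := slice1_hasDerivAt hg.differentiableAt.hasFDerivAt
  have hv : Dq1 g p / p.1 = fderiv ℂ g p (1, 0) := by
    rw [dq1_eq_fderiv hg.differentiableAt]; field_simp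
  rw [hv]; exact h

lemma slice2_G {g : ℂ × ℂ → ℂ} {p : ℂ × ℂ} (hg : AnalyticAt ℂ g p) (hp2 : p.2 ≠ 0) :
    HasDerivAt (fun w => g (p.1, w)) (Dq2 g p / p.2) p.2 := by
  have h := slice2_hasDerivAt hg.differentiableAt.hasFDerivAt
  have hv : Dq2 g p / p.2 = fderiv ℂ g p (0, 1) := by
    rw [dq2_eq_fderiv hg.differentiableAt]; field_simp
  rw [hv]; exact h

/-- slice of `fun q => fderiv t q v` has derivative given by second fderiv. -/
lemma slice1_fderiv_apply {t : ℂ × ℂ → ℂ} {p : ℂ × ℂ} (ht : AnalyticAt ℂ t p) (v : ℂ × ℂ) :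
    HasDerivAt (fun z => fderiv ℂ t (z, p.2) v) (fderiv ℂ (fderiv ℂ t) p (1, 0) v) p.1 := by
  have hfd : HasFDerivAt (fderiv ℂ t) (fderiv ℂ (fderiv ℂ t) p) p :=
    ht.fderiv.differentiableAt.hasFDerivAt
  have hc : HasFDerivAt (fun q => fderiv ℂ t q v)
      ((fderiv ℂ (fderiv ℂ t) p).flip v) p := by
    have h := hfd.clm_apply (hasFDerivAt_const v p)
    simpa using h
  simpa using slice1_hasDerivAt hc

lemma slice2_fderiv_apply {t : ℂ × ℂ → ℂ} {p : ℂ × ℂ} (ht : AnalyticAt ℂ t p) (v : ℂ × ℂ) :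
    HasDerivAt (fun w => fderiv ℂ t (p.1, w) v) (fderiv ℂ (fderiv ℂ t) p (0, 1) v) p.2 := by
  have hfd : HasFDerivAt (fderiv ℂ t) (fderiv ℂ (fderiv ℂ t) p) p :=
    ht.fderiv.differentiableAt.hasFDerivAt
  have hc : HasFDerivAt (fun q => fderiv ℂ t q v)
      ((fderiv ℂ (fderiv ℂ t) p).flip v) p := by
    have h := hfd.clm_apply (hasFDerivAt_const v p)
    simpa using h
  simpa using slice2_hasDerivAt hc

lemma ev_mem_slice1 {U : Set (ℂ × ℂ)} {p : ℂ × ℂ} (hUopen : IsOpen U) (hp : p ∈ U) :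
    ∀ᶠ z in nhds p.1, (z, p.2) ∈ U := by
  have hc : ContinuousAt (fun z : ℂ => ((z, p.2) : ℂ × ℂ)) p.1 :=
    (continuous_id.prodMk continuous_const).continuousAt
  have := hc.preimage_mem_nhds (by rw [Prod.mk.eta]; exact hUopen.mem_nhds hp)
  exact this

lemma ev_mem_slice2 {U : Set (ℂ × ℂ)} {p : ℂ × ℂ} (hUopen : IsOpen U) (hp : p ∈ U) :
    ∀ᶠ w in nhds p.2, (p.1, w) ∈ U := by
  have hc : ContinuousAt (fun w : ℂ => ((p.1, w) : ℂ × ℂ)) p.2 :=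
    (continuous_const.prodMk continuous_id).continuousAt
  have := hc.preimage_mem_nhds (by rw [Prod.mk.eta]; exact hUopen.mem_nhds hp)
  exact this

/-- symmetry of mixed `Dq` derivatives of `G`. -/
lemma dq1_G2_eq_dq2_G1 {t : ℂ × ℂ → ℂ} {U : Set (ℂ × ℂ)} {p : ℂ × ℂ}
    (hUopen : IsOpen U) (hp : p ∈ U) (ht : AnalyticOnNhd ℂ t U) (htne : t p ≠ 0) :
    Dq1 (G2 t) p = Dq2 (G1 t) p := by
  have htp := ht p hp
  have ht1 : HasDerivAt (fun z => t (z, p.2)) (fderiv ℂ t p (1, 0)) p.1 :=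
    slice1_hasDerivAt htp.differentiableAt.hasFDerivAt
  have ht2 : HasDerivAt (fun w => t (p.1, w)) (fderiv ℂ t p (0, 1)) p.2 :=
    slice2_hasDerivAt htp.differentiableAt.hasFDerivAt
  have hS12 := slice1_fderiv_apply htp (0, 1)
  have hS21 := slice2_fderiv_apply htp (1, 0)
  have htne' : t (p.1, p.2) ≠ 0 := by rwa [Prod.mk.eta]
  -- LHS
  have hnum1 : HasDerivAt (fun z => p.2 * fderiv ℂ t (z, p.2) (0, 1))
      (p.2 * fderiv ℂ (fderiv ℂ t) p (1, 0) (0, 1)) p.1 := hS12.const_mul p.2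
  have hdiv1 := hnum1.div ht1 htne'
  have heq1 : (fun z => p.2 * fderiv ℂ t (z, p.2) (0, 1) / t (z, p.2)) =ᶠ[nhds p.1]
      (fun z => G2 t (z, p.2)) := by
    filter_upwards [ev_mem_slice1 hUopen hp] with z hz
    simp only [G2, dq2_eq_fderiv (ht _ hz).differentiableAt]
  have hL := (hdiv1.congr_of_eventuallyEq heq1.symm).deriv
  -- RHS
  have hnum2 : HasDerivAt (fun w => p.1 * fderiv ℂ t (p.1, w) (1, 0))
      (p.1 * fderiv ℂ (fderiv ℂ t) p (0, 1) (1, 0)) p.2 := hS21.const_mul p.1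
  have hdiv2 := hnum2.div ht2 htne'
  have heq2 : (fun w => p.1 * fderiv ℂ t (p.1, w) (1, 0) / t (p.1, w)) =ᶠ[nhds p.2]
      (fun w => G1 t (p.1, w)) := by
    filter_upwards [ev_mem_slice2 hUopen hp] with w hw
    simp only [G1, dq1_eq_fderiv (ht _ hw).differentiableAt]
  have hR := (hdiv2.congr_of_eventuallyEq heq2.symm).deriv
  have hsym : fderiv ℂ (fderiv ℂ t) p (1, 0) (0, 1) = fderiv ℂ (fderiv ℂ t) p (0, 1) (1, 0) := by
    have h2 : ContDiffAt ℂ 2 t p := htp.contDiffAt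
    exact (h2.isSymmSndFDerivAt (by simp)) _ _
  rw [Dq1, Dq2, hL, hR]
  simp only [Prod.mk.eta]
  rw [hsym]
  ring

set_option maxHeartbeats 1600000 in
lemma keyA (A B C D E H f d s n1 n2 kx ky kf : ℂ) (hd : d ≠ 0) (hs : s ≠ 0) :
    f * (E * D - H * C) ^ 2 / d ^ 2 + f / d * (D * (n1 / d ^ 2) - C * (n2 / d ^ 2))
    + 2 * C * D / s *
        (f * (E * D - H * C) * (-(B * E) + A * H) / d ^ 2 +
          f / d * (-B * (n1 / d ^ 2) + A * (n2 / d ^ 2)))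
    + kx / (d * s) * (f * (E * D - H * C) / d)
    + ky / (d * s) * (f * (-(B * E) + A * H) / d)
    + -(kf / (d * s)) * f
    = (f * (E * D - H * C) ^ 2 * (d * s) + f * s * (D * n1 - C * n2)
      + 2 * C * D * f * ((E * D - H * C) * (-(B * E) + A * H) * d + (-B * n1 + A * n2))
      + kx * f * (E * D - H * C) * d + ky * f * (-(B * E) + A * H) * d
      - kf * f * d ^ 2) / (d ^ 3 * s) := by
  have hd2 : (d : ℂ) ^ 2 ≠ 0 := pow_ne_zero _ hd
  have hd3s : d ^ 3 * s ≠ 0 := mul_ne_zero (pow_ne_zero _ hd) hs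
  have hdd2 : d * d ^ 2 ≠ 0 := mul_ne_zero hd hd2
  have hds : d * s ≠ 0 := mul_ne_zero hd hs
  have e1 : f * (E * D - H * C) ^ 2 / d ^ 2
      = f * (E * D - H * C) ^ 2 * (d * s) / (d ^ 3 * s) := by
    rw [div_eq_div_iff hd2 hd3s]; ring
  have e2 : f / d * (D * (n1 / d ^ 2) - C * (n2 / d ^ 2))
      = f * s * (D * n1 - C * n2) / (d ^ 3 * s) := by
    rw [← mul_div_assoc, ← mul_div_assoc, div_sub_div_same, div_mul_div_comm,
      div_eq_div_iff hdd2 hd3s]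
    ring
  have e3 : 2 * C * D / s *
        (f * (E * D - H * C) * (-(B * E) + A * H) / d ^ 2 +
          f / d * (-B * (n1 / d ^ 2) + A * (n2 / d ^ 2)))
      = 2 * C * D * f * ((E * D - H * C) * (-(B * E) + A * H) * d + (-B * n1 + A * n2)) /
        (d ^ 3 * s) := by
    rw [← mul_div_assoc, ← mul_div_assoc, ← add_div, div_mul_div_comm,
      div_add_div _ _ hd2 hdd2, div_mul_div_comm,
      div_eq_div_iff (mul_ne_zero hs (mul_ne_zero hd2 hdd2)) hd3s]
    ring
  have e4 : kx / (d * s) * (f * (E * D - H * C) / d)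
      = kx * f * (E * D - H * C) * d / (d ^ 3 * s) := by
    rw [div_mul_div_comm, div_eq_div_iff (mul_ne_zero hds hd) hd3s]; ring
  have e5 : ky / (d * s) * (f * (-(B * E) + A * H) / d)
      = ky * f * (-(B * E) + A * H) * d / (d ^ 3 * s) := by
    rw [div_mul_div_comm, div_eq_div_iff (mul_ne_zero hds hd) hd3s]; ring
  have e6 : -(kf / (d * s)) * f = -(kf * f * d ^ 2) / (d ^ 3 * s) := by
    rw [← neg_div, div_mul_eq_mul_div, div_eq_div_iff hds hd3s]; ring
  rw [e1, e2, e3, e4, e5, e6, ← add_div, ← add_div, ← add_div,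
    ← add_div, ← add_div]
  congr 1

set_option maxHeartbeats 1600000 in
lemma keyB (A B C D E H PX QX MX PY QY MY PF QF MF f : ℂ) :
    f * (E * D - H * C) ^ 2 * ((A * D - B * C) * (A * D + C * B)) +
    f * (A * D + C * B) *
      (D * ((PF * D + E * MY - (MF * C + H * PY)) * (A * D - B * C) -
            (E * D - H * C) * (PX * D + A * MY - (MX * C + B * PY)))
       - C * ((MF * D + E * QY - (QF * C + H * MY)) * (A * D - B * C) -
            (E * D - H * C) * (MX * D + A * QY - (QX * C + B * MY)))) +
    2 * C * D * f * ((E * D - H * C) * (-(B * E) + A * H) * (A * D - B * C) +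
      (-B * ((PF * D + E * MY - (MF * C + H * PY)) * (A * D - B * C) -
            (E * D - H * C) * (PX * D + A * MY - (MX * C + B * PY)))
       + A * ((MF * D + E * QY - (QF * C + H * MY)) * (A * D - B * C) -
            (E * D - H * C) * (MX * D + A * QY - (QX * C + B * MY))))) +
    (D ^ 2 * (PX - 2 * E * A) - C ^ 2 * (QX - 2 * H * B)) * f * (E * D - H * C) * (A * D - B * C) +
    (D ^ 2 * (PY - 2 * E * C) - C ^ 2 * (QY - 2 * H * D)) * f * (-(B * E) + A * H) * (A * D - B * C)
    - (D ^ 2 * (PF - E ^ 2) - C ^ 2 * (QF - H ^ 2)) * f * (A * D - B * C) ^ 2 = 0 := by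
  ring


theorem stmt0
    (U : Set (ℂ × ℂ)) (hUopen : IsOpen U)
    (hU : ∀ p ∈ U, p.1 ≠ 0 ∧ p.2 ≠ 0)
    (F x y : ℂ × ℂ → ℂ)
    (hF : AnalyticOnNhd ℂ F U) (hx : AnalyticOnNhd ℂ x U) (hy : AnalyticOnNhd ℂ y U)
    (hFne : ∀ p ∈ U, F p ≠ 0) (hxne : ∀ p ∈ U, x p ≠ 0) (hyne : ∀ p ∈ U, y p ≠ 0)
    (hΔ : ∀ p ∈ U, Del x y p ≠ 0)
    (hden : ∀ p ∈ U, (G1 x p) ^ 2 * (G2 y p) ^ 2 - (G1 y p) ^ 2 * (G2 x p) ^ 2 ≠ 0) :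
    ∀ p ∈ U,
      DXX F x y p
      + (2 * G1 y p * G2 y p / (G1 x p * G2 y p + G1 y p * G2 x p)) * DXY F x y p
      + (((G2 y p) ^ 2 * (Dq1 (G1 x) p - 2 * G1 F p * G1 x p)
          - (G1 y p) ^ 2 * (Dq2 (G2 x) p - 2 * G2 F p * G2 x p)) /
          ((G1 x p) ^ 2 * (G2 y p) ^ 2 - (G1 y p) ^ 2 * (G2 x p) ^ 2)) * DX F x y p
      + (((G2 y p) ^ 2 * (Dq1 (G1 y) p - 2 * G1 F p * G1 y p)
          - (G1 y p) ^ 2 * (Dq2 (G2 y) p - 2 * G2 F p * G2 y p)) /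
          ((G1 x p) ^ 2 * (G2 y p) ^ 2 - (G1 y p) ^ 2 * (G2 x p) ^ 2)) * DY F x y p
      + (-(((G2 y p) ^ 2 * (Dq1 (G1 F) p - (G1 F p) ^ 2)
          - (G1 y p) ^ 2 * (Dq2 (G2 F) p - (G2 F p) ^ 2)) /
          ((G1 x p) ^ 2 * (G2 y p) ^ 2 - (G1 y p) ^ 2 * (G2 x p) ^ 2))) * F p = 0 := by

  intro p hp
  obtain ⟨hp1, hp2⟩ := hU p hp
  have hFp := hFne p hp
  have hxp := hxne p hp
  have hyp := hyne p hp
  have aF1 := g1_analyticAt hUopen hp hF hFp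
  have aF2 := g2_analyticAt hUopen hp hF hFp
  have ax1 := g1_analyticAt hUopen hp hx hxp
  have ax2 := g2_analyticAt hUopen hp hx hxp
  have ay1 := g1_analyticAt hUopen hp hy hyp
  have ay2 := g2_analyticAt hUopen hp hy hyp
  have s1F1 := slice1_G aF1 hp1
  have s1F2 := slice1_G aF2 hp1
  have s1x1 := slice1_G ax1 hp1
  have s1x2 := slice1_G ax2 hp1
  have s1y1 := slice1_G ay1 hp1
  have s1y2 := slice1_G ay2 hp1
  have s2F1 := slice2_G aF1 hp2
  have s2F2 := slice2_G aF2 hp2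
  have s2x1 := slice2_G ax1 hp2
  have s2x2 := slice2_G ax2 hp2
  have s2y1 := slice2_G ay1 hp2
  have s2y2 := slice2_G ay2 hp2
  have hΔp : Del x y p ≠ 0 := hΔ p hp
  have hNum1 : HasDerivAt (fun z => DelX F y (z, p.2))
      (Dq1 (G1 F) p / p.1 * G2 y p + G1 F p * (Dq1 (G2 y) p / p.1)
        - (Dq1 (G2 F) p / p.1 * G1 y p + G2 F p * (Dq1 (G1 y) p / p.1))) p.1 := by
    simpa only [DelX, Prod.mk.eta, Pi.mul_def, Pi.sub_def] using (s1F1.mul s1y2).sub (s1F2.mul s1y1)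
  have hDen1 : HasDerivAt (fun z => Del x y (z, p.2))
      (Dq1 (G1 x) p / p.1 * G2 y p + G1 x p * (Dq1 (G2 y) p / p.1)
        - (Dq1 (G2 x) p / p.1 * G1 y p + G2 x p * (Dq1 (G1 y) p / p.1))) p.1 := by
    simpa only [Del, Prod.mk.eta, Pi.mul_def, Pi.sub_def] using (s1x1.mul s1y2).sub (s1x2.mul s1y1)
  have hNum2 : HasDerivAt (fun w => DelX F y (p.1, w))
      (Dq2 (G1 F) p / p.2 * G2 y p + G1 F p * (Dq2 (G2 y) p / p.2)
        - (Dq2 (G2 F) p / p.2 * G1 y p + G2 F p * (Dq2 (G1 y) p / p.2))) p.2 := by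
    simpa only [DelX, Prod.mk.eta, Pi.mul_def, Pi.sub_def] using (s2F1.mul s2y2).sub (s2F2.mul s2y1)
  have hDen2 : HasDerivAt (fun w => Del x y (p.1, w))
      (Dq2 (G1 x) p / p.2 * G2 y p + G1 x p * (Dq2 (G2 y) p / p.2)
        - (Dq2 (G2 x) p / p.2 * G1 y p + G2 x p * (Dq2 (G1 y) p / p.2))) p.2 := by
    simpa only [Del, Prod.mk.eta, Pi.mul_def, Pi.sub_def] using (s2x1.mul s2y2).sub (s2x2.mul s2y1)
  have hq1 : HasDerivAt (fun z => RX F x y (z, p.2))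
      (((Dq1 (G1 F) p / p.1 * G2 y p + G1 F p * (Dq1 (G2 y) p / p.1)
        - (Dq1 (G2 F) p / p.1 * G1 y p + G2 F p * (Dq1 (G1 y) p / p.1))) * Del x y p
        - DelX F y p * (Dq1 (G1 x) p / p.1 * G2 y p + G1 x p * (Dq1 (G2 y) p / p.1)
        - (Dq1 (G2 x) p / p.1 * G1 y p + G2 x p * (Dq1 (G1 y) p / p.1)))) / (Del x y p) ^ 2)
      p.1 := by
    simpa only [RX, Prod.mk.eta] using hNum1.fun_div hDen1 (by rwa [Prod.mk.eta])
  have hq2 : HasDerivAt (fun w => RX F x y (p.1, w))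
      (((Dq2 (G1 F) p / p.2 * G2 y p + G1 F p * (Dq2 (G2 y) p / p.2)
        - (Dq2 (G2 F) p / p.2 * G1 y p + G2 F p * (Dq2 (G1 y) p / p.2))) * Del x y p
        - DelX F y p * (Dq2 (G1 x) p / p.2 * G2 y p + G1 x p * (Dq2 (G2 y) p / p.2)
        - (Dq2 (G2 x) p / p.2 * G1 y p + G2 x p * (Dq2 (G1 y) p / p.2)))) / (Del x y p) ^ 2)
      p.2 := by
    simpa only [RX, Prod.mk.eta] using hNum2.fun_div hDen2 (by rwa [Prod.mk.eta])
  have hRX1 : Dq1 (RX F x y) p = p.1 *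
      (((Dq1 (G1 F) p / p.1 * G2 y p + G1 F p * (Dq1 (G2 y) p / p.1)
        - (Dq1 (G2 F) p / p.1 * G1 y p + G2 F p * (Dq1 (G1 y) p / p.1))) * Del x y p
        - DelX F y p * (Dq1 (G1 x) p / p.1 * G2 y p + G1 x p * (Dq1 (G2 y) p / p.1)
        - (Dq1 (G2 x) p / p.1 * G1 y p + G2 x p * (Dq1 (G1 y) p / p.1)))) / (Del x y p) ^ 2) := by
    rw [Dq1, hq1.deriv]
  have hRX2 : Dq2 (RX F x y) p = p.2 *
      (((Dq2 (G1 F) p / p.2 * G2 y p + G1 F p * (Dq2 (G2 y) p / p.2)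
        - (Dq2 (G2 F) p / p.2 * G1 y p + G2 F p * (Dq2 (G1 y) p / p.2))) * Del x y p
        - DelX F y p * (Dq2 (G1 x) p / p.2 * G2 y p + G1 x p * (Dq2 (G2 y) p / p.2)
        - (Dq2 (G2 x) p / p.2 * G1 y p + G2 x p * (Dq2 (G1 y) p / p.2)))) / (Del x y p) ^ 2) := by
    rw [Dq2, hq2.deriv]
  have hsF : Dq2 (G1 F) p = Dq1 (G2 F) p := (dq1_G2_eq_dq2_G1 hUopen hp hF hFp).symm
  have hsx : Dq2 (G1 x) p = Dq1 (G2 x) p := (dq1_G2_eq_dq2_G1 hUopen hp hx hxp).symm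
  have hsy : Dq2 (G1 y) p = Dq1 (G2 y) p := (dq1_G2_eq_dq2_G1 hUopen hp hy hyp).symm
  have hdenp := hden p hp
  have hsum : G1 x p * G2 y p + G1 y p * G2 x p ≠ 0 := by
    intro h0
    apply hdenp
    have hfc : (G1 x p) ^ 2 * (G2 y p) ^ 2 - (G1 y p) ^ 2 * (G2 x p) ^ 2
        = (G1 x p * G2 y p - G2 x p * G1 y p) * (G1 x p * G2 y p + G1 y p * G2 x p) := by
      ring
    rw [hfc, h0, mul_zero]
  have hΔp' : G1 x p * G2 y p - G2 x p * G1 y p ≠ 0 := by simpa only [Del] using hΔp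
  have hRX1' : Dq1 (RX F x y) p =
      ((Dq1 (G1 F) p * G2 y p + G1 F p * Dq1 (G2 y) p
          - (Dq1 (G2 F) p * G1 y p + G2 F p * Dq1 (G1 y) p))
          * (G1 x p * G2 y p - G2 x p * G1 y p)
        - (G1 F p * G2 y p - G2 F p * G1 y p)
          * (Dq1 (G1 x) p * G2 y p + G1 x p * Dq1 (G2 y) p
          - (Dq1 (G2 x) p * G1 y p + G2 x p * Dq1 (G1 y) p)))
        / (G1 x p * G2 y p - G2 x p * G1 y p) ^ 2 := by
    rw [hRX1]
    simp only [DelX, Del]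
    field_simp
  have hRX2' : Dq2 (RX F x y) p =
      ((Dq1 (G2 F) p * G2 y p + G1 F p * Dq2 (G2 y) p
          - (Dq2 (G2 F) p * G1 y p + G2 F p * Dq1 (G2 y) p))
          * (G1 x p * G2 y p - G2 x p * G1 y p)
        - (G1 F p * G2 y p - G2 F p * G1 y p)
          * (Dq1 (G2 x) p * G2 y p + G1 x p * Dq2 (G2 y) p
          - (Dq2 (G2 x) p * G1 y p + G2 x p * Dq1 (G2 y) p)))
        / (G1 x p * G2 y p - G2 x p * G1 y p) ^ 2 := by
    rw [hRX2, hsF, hsx, hsy]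
    simp only [DelX, Del]
    field_simp
  have hfac : (G1 x p) ^ 2 * (G2 y p) ^ 2 - (G1 y p) ^ 2 * (G2 x p) ^ 2
      = (G1 x p * G2 y p - G2 x p * G1 y p) * (G1 x p * G2 y p + G1 y p * G2 x p) := by
    ring
  simp only [DXX, DXY, DX, DY]
  rw [hRX1', hRX2', hfac]
  simp only [DelX, DelY, Del]
  rw [keyA (G1 x p) (G2 x p) (G1 y p) (G2 y p) (G1 F p) (G2 F p) (F p)
      (G1 x p * G2 y p - G2 x p * G1 y p) (G1 x p * G2 y p + G1 y p * G2 x p)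
      _ _ _ _ _ hΔp' hsum,
    div_eq_zero_iff]
  left
  exact keyB (G1 x p) (G2 x p) (G1 y p) (G2 y p) (G1 F p) (G2 F p)
    (Dq1 (G1 x) p) (Dq2 (G2 x) p) (Dq1 (G2 x) p)
    (Dq1 (G1 y) p) (Dq2 (G2 y) p) (Dq1 (G2 y) p)
    (Dq1 (G1 F) p) (Dq2 (G2 F) p) (Dq1 (G2 F) p) (F p)
end

section
/- Let U ⊆ (ℂ∖{0})² be open with coordinates (q₁,q₂), and let F, x, y be holomorphic nonvanishing functions on U with Δ = G_{x,1}G_{y,2} − G_{x,2}G_{y,1} nonvanishing and G_{x,1}²G_{y,2}² − G_{y,1}²G_{x,2}² nonvanishing on U. Then on U the identity D_y²F + b₀·D_xD_yF + b₁·D_xF + b₂·D_yF + b₃·F = 0 holds, where b₀ = 2G_{x,1}G_{x,2}/(G_{x,1}G_{y,2} + G_{y,1}G_{x,2}), b₁ = (−G_{x,2}²(D_{q₁}G_{x,1} − 2G_{F,1}G_{x,1}) + G_{x,1}²(D_{q₂}G_{x,2} − 2G_{F,2}G_{x,2}))/(G_{x,1}²G_{y,2}² − G_{y,1}²G_{x,2}²),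 b₂ = (−G_{x,2}²(D_{q₁}G_{y,1} − 2G_{F,1}G_{y,1}) + G_{x,1}²(D_{q₂}G_{y,2} − 2G_{F,2}G_{y,2}))/(G_{x,1}²G_{y,2}² − G_{y,1}²G_{x,2}²), and b₃ = −(−G_{x,2}²(D_{q₁}G_{F,1} − G_{F,1}²) + G_{x,1}²(D_{q₂}G_{F,2} − G_{F,2}²))/(G_{x,1}²G_{y,2}² − G_{y,1}²G_{x,2}²). -/
/- STATEMENT 1: the second partial differential equation (in `y`) satisfied by a
modular form `F` of two variables, expressed via the chain-rule operators. -/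

open Complex

/-- `D_y²F = F·Δ_y²/Δ² + (F/Δ)(−G_{x,2}·D_{q₁}(Δ_y/Δ) + G_{x,1}·D_{q₂}(Δ_y/Δ))`. -/
noncomputable def DYY (F x y : ℂ × ℂ → ℂ) : ℂ × ℂ → ℂ :=
  fun p => F p * (DelY F x p) ^ 2 / (Del x y p) ^ 2 +
    F p / Del x y p *
      (-(G2 x p) * Dq1 (RY F x y) p + G1 x p * Dq2 (RY F x y) p)



private lemma slice1_hasDerivAt_s1 {f : ℂ × ℂ → ℂ} {p : ℂ × ℂ} (hf : DifferentiableAt ℂ f p) :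
    HasDerivAt (fun z => f (z, p.2)) (fderiv ℂ f p (1, 0)) p.1 := by
  have h1 : HasDerivAt (fun z : ℂ => (z, p.2)) ((1 : ℂ), (0 : ℂ)) p.1 :=
    (hasDerivAt_id p.1).prodMk (hasDerivAt_const p.1 p.2)
  have h2 : HasFDerivAt f (fderiv ℂ f p) ((p.1, p.2) : ℂ × ℂ) := by
    rw [Prod.mk.eta]; exact hf.hasFDerivAt
  exact h2.comp_hasDerivAt p.1 h1

private lemma slice2_hasDerivAt_s1 {f : ℂ × ℂ → ℂ} {p : ℂ × ℂ} (hf : DifferentiableAt ℂ f p) :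
    HasDerivAt (fun z => f (p.1, z)) (fderiv ℂ f p (0, 1)) p.2 := by
  have h1 : HasDerivAt (fun z : ℂ => (p.1, z)) ((0 : ℂ), (1 : ℂ)) p.2 :=
    (hasDerivAt_const p.2 p.1).prodMk (hasDerivAt_id p.2)
  have h2 : HasFDerivAt f (fderiv ℂ f p) ((p.1, p.2) : ℂ × ℂ) := by
    rw [Prod.mk.eta]; exact hf.hasFDerivAt
  exact h2.comp_hasDerivAt p.2 h1
open Filter in
private lemma dq1_eq {f : ℂ × ℂ → ℂ} {p : ℂ × ℂ} (hf : DifferentiableAt ℂ f p) :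
    Dq1 f p = p.1 * fderiv ℂ f p (1, 0) := by
  unfold Dq1; rw [(slice1_hasDerivAt_s1 hf).deriv]

open Filter in
private lemma dq2_eq {f : ℂ × ℂ → ℂ} {p : ℂ × ℂ} (hf : DifferentiableAt ℂ f p) :
    Dq2 f p = p.2 * fderiv ℂ f p (0, 1) := by
  unfold Dq2; rw [(slice2_hasDerivAt_s1 hf).deriv]

open Filter in
private lemma Dq1_congr {f g : ℂ × ℂ → ℂ} {p : ℂ × ℂ} (h : f =ᶠ[nhds p] g) :
    Dq1 f p = Dq1 g p := by
  unfold Dq1; congr 1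
  apply Filter.EventuallyEq.deriv_eq
  have ht : Filter.Tendsto (fun z : ℂ => ((z, p.2) : ℂ × ℂ)) (nhds p.1) (nhds p) := by
    exact Continuous.tendsto' (by continuity) p.1 p rfl
  exact h.comp_tendsto ht

open Filter in
private lemma Dq2_congr {f g : ℂ × ℂ → ℂ} {p : ℂ × ℂ} (h : f =ᶠ[nhds p] g) :
    Dq2 f p = Dq2 g p := by
  unfold Dq2; congr 1
  apply Filter.EventuallyEq.deriv_eq
  have ht : Filter.Tendsto (fun z : ℂ => ((p.1, z) : ℂ × ℂ)) (nhds p.2) (nhds p) := by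
    exact Continuous.tendsto' (by continuity) p.2 p rfl
  exact h.comp_tendsto ht

private lemma Dq1_div {f g : ℂ × ℂ → ℂ} {p : ℂ × ℂ} (hf : DifferentiableAt ℂ f p)
    (hg : DifferentiableAt ℂ g p) (hg0 : g p ≠ 0) :
    Dq1 (fun q => f q / g q) p = (Dq1 f p * g p - f p * Dq1 g p) / g p ^ 2 := by
  have hg0' : g (p.1, p.2) ≠ 0 := by rwa [Prod.mk.eta]
  have h := ((slice1_hasDerivAt_s1 hf).div (slice1_hasDerivAt_s1 hg) hg0').deriv
  unfold Dq1
  erw [h]; rw [(slice1_hasDerivAt_s1 hf).deriv, (slice1_hasDerivAt_s1 hg).deriv, Prod.mk.eta]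
  ring

private lemma Dq2_div {f g : ℂ × ℂ → ℂ} {p : ℂ × ℂ} (hf : DifferentiableAt ℂ f p)
    (hg : DifferentiableAt ℂ g p) (hg0 : g p ≠ 0) :
    Dq2 (fun q => f q / g q) p = (Dq2 f p * g p - f p * Dq2 g p) / g p ^ 2 := by
  have hg0' : g (p.1, p.2) ≠ 0 := by rwa [Prod.mk.eta]
  have h := ((slice2_hasDerivAt_s1 hf).div (slice2_hasDerivAt_s1 hg) hg0').deriv
  unfold Dq2
  erw [h]; rw [(slice2_hasDerivAt_s1 hf).deriv, (slice2_hasDerivAt_s1 hg).deriv, Prod.mk.eta]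
  ring

private lemma Dq1_delx {f1 f2 f3 f4 : ℂ × ℂ → ℂ} {p : ℂ × ℂ}
    (h1 : DifferentiableAt ℂ f1 p) (h2 : DifferentiableAt ℂ f2 p)
    (h3 : DifferentiableAt ℂ f3 p) (h4 : DifferentiableAt ℂ f4 p) :
    Dq1 (fun q => f1 q * f2 q - f3 q * f4 q) p
      = (Dq1 f1 p * f2 p + f1 p * Dq1 f2 p) - (Dq1 f3 p * f4 p + f3 p * Dq1 f4 p) := by
  have h := (((slice1_hasDerivAt_s1 h1).mul (slice1_hasDerivAt_s1 h2)).sub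
    ((slice1_hasDerivAt_s1 h3).mul (slice1_hasDerivAt_s1 h4))).deriv
  unfold Dq1
  erw [h]; rw [(slice1_hasDerivAt_s1 h1).deriv, (slice1_hasDerivAt_s1 h2).deriv,
    (slice1_hasDerivAt_s1 h3).deriv, (slice1_hasDerivAt_s1 h4).deriv, Prod.mk.eta]
  ring

private lemma Dq2_delx {f1 f2 f3 f4 : ℂ × ℂ → ℂ} {p : ℂ × ℂ}
    (h1 : DifferentiableAt ℂ f1 p) (h2 : DifferentiableAt ℂ f2 p)
    (h3 : DifferentiableAt ℂ f3 p) (h4 : DifferentiableAt ℂ f4 p) :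
    Dq2 (fun q => f1 q * f2 q - f3 q * f4 q) p
      = (Dq2 f1 p * f2 p + f1 p * Dq2 f2 p) - (Dq2 f3 p * f4 p + f3 p * Dq2 f4 p) := by
  have h := (((slice2_hasDerivAt_s1 h1).mul (slice2_hasDerivAt_s1 h2)).sub
    ((slice2_hasDerivAt_s1 h3).mul (slice2_hasDerivAt_s1 h4))).deriv
  unfold Dq2
  erw [h]; rw [(slice2_hasDerivAt_s1 h1).deriv, (slice2_hasDerivAt_s1 h2).deriv,
    (slice2_hasDerivAt_s1 h3).deriv, (slice2_hasDerivAt_s1 h4).deriv, Prod.mk.eta]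
  ring

private lemma Dq1_dely {f1 f2 f3 f4 : ℂ × ℂ → ℂ} {p : ℂ × ℂ}
    (h1 : DifferentiableAt ℂ f1 p) (h2 : DifferentiableAt ℂ f2 p)
    (h3 : DifferentiableAt ℂ f3 p) (h4 : DifferentiableAt ℂ f4 p) :
    Dq1 (fun q => -(f1 q * f2 q) + f3 q * f4 q) p
      = -(Dq1 f1 p * f2 p + f1 p * Dq1 f2 p) + (Dq1 f3 p * f4 p + f3 p * Dq1 f4 p) := by
  have h := ((((slice1_hasDerivAt_s1 h1).mul (slice1_hasDerivAt_s1 h2)).neg).add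
    ((slice1_hasDerivAt_s1 h3).mul (slice1_hasDerivAt_s1 h4))).deriv
  unfold Dq1
  erw [h]; rw [(slice1_hasDerivAt_s1 h1).deriv, (slice1_hasDerivAt_s1 h2).deriv,
    (slice1_hasDerivAt_s1 h3).deriv, (slice1_hasDerivAt_s1 h4).deriv, Prod.mk.eta]
  ring

private lemma Dq2_dely {f1 f2 f3 f4 : ℂ × ℂ → ℂ} {p : ℂ × ℂ}
    (h1 : DifferentiableAt ℂ f1 p) (h2 : DifferentiableAt ℂ f2 p)
    (h3 : DifferentiableAt ℂ f3 p) (h4 : DifferentiableAt ℂ f4 p) :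
    Dq2 (fun q => -(f1 q * f2 q) + f3 q * f4 q) p
      = -(Dq2 f1 p * f2 p + f1 p * Dq2 f2 p) + (Dq2 f3 p * f4 p + f3 p * Dq2 f4 p) := by
  have h := ((((slice2_hasDerivAt_s1 h1).mul (slice2_hasDerivAt_s1 h2)).neg).add
    ((slice2_hasDerivAt_s1 h3).mul (slice2_hasDerivAt_s1 h4))).deriv
  unfold Dq2
  erw [h]; rw [(slice2_hasDerivAt_s1 h1).deriv, (slice2_hasDerivAt_s1 h2).deriv,
    (slice2_hasDerivAt_s1 h3).deriv, (slice2_hasDerivAt_s1 h4).deriv, Prod.mk.eta]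
  ring
private lemma P1_diffAt {U : Set (ℂ × ℂ)} {t : ℂ × ℂ → ℂ} (ht : AnalyticOnNhd ℂ t U)
    {p : ℂ × ℂ} (hp : p ∈ U) (v : ℂ × ℂ) :
    DifferentiableAt ℂ (fun q => fderiv ℂ t q v) p :=
  ((ht p hp).fderiv.differentiableAt).clm_apply (differentiableAt_const v)

private lemma G1_eventuallyEq {U : Set (ℂ × ℂ)} (hUo : IsOpen U) {t : ℂ × ℂ → ℂ}
    (ht : AnalyticOnNhd ℂ t U) {p : ℂ × ℂ} (hp : p ∈ U) :
    G1 t =ᶠ[nhds p] fun q => q.1 * fderiv ℂ t q (1, 0) / t q := by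
  filter_upwards [hUo.mem_nhds hp] with q hq
  show Dq1 t q / t q = _
  rw [dq1_eq (ht q hq).differentiableAt]

private lemma G2_eventuallyEq {U : Set (ℂ × ℂ)} (hUo : IsOpen U) {t : ℂ × ℂ → ℂ}
    (ht : AnalyticOnNhd ℂ t U) {p : ℂ × ℂ} (hp : p ∈ U) :
    G2 t =ᶠ[nhds p] fun q => q.2 * fderiv ℂ t q (0, 1) / t q := by
  filter_upwards [hUo.mem_nhds hp] with q hq
  show Dq2 t q / t q = _
  rw [dq2_eq (ht q hq).differentiableAt]

private lemma G1_diffAt {U : Set (ℂ × ℂ)} (hUo : IsOpen U) {t : ℂ × ℂ → ℂ}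
    (ht : AnalyticOnNhd ℂ t U) (htne : ∀ q ∈ U, t q ≠ 0) {p : ℂ × ℂ} (hp : p ∈ U) :
    DifferentiableAt ℂ (G1 t) p := by
  have hfst : DifferentiableAt ℂ (fun q : ℂ × ℂ => q.1) p := differentiableAt_fst
  have hd : DifferentiableAt ℂ (fun q : ℂ × ℂ => q.1 * fderiv ℂ t q (1, 0) / t q) p := by
    simp only [div_eq_mul_inv]
    exact (hfst.mul (P1_diffAt ht hp _)).mul ((ht p hp).differentiableAt.inv (htne p hp))
  exact hd.congr_of_eventuallyEq (G1_eventuallyEq hUo ht hp)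

private lemma G2_diffAt {U : Set (ℂ × ℂ)} (hUo : IsOpen U) {t : ℂ × ℂ → ℂ}
    (ht : AnalyticOnNhd ℂ t U) (htne : ∀ q ∈ U, t q ≠ 0) {p : ℂ × ℂ} (hp : p ∈ U) :
    DifferentiableAt ℂ (G2 t) p := by
  have hsnd : DifferentiableAt ℂ (fun q : ℂ × ℂ => q.2) p := differentiableAt_snd
  have hd : DifferentiableAt ℂ (fun q : ℂ × ℂ => q.2 * fderiv ℂ t q (0, 1) / t q) p := by
    simp only [div_eq_mul_inv]
    exact (hsnd.mul (P1_diffAt ht hp _)).mul ((ht p hp).differentiableAt.inv (htne p hp))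
  exact hd.congr_of_eventuallyEq (G2_eventuallyEq hUo ht hp)

private lemma fderiv_P {U : Set (ℂ × ℂ)} {t : ℂ × ℂ → ℂ} (ht : AnalyticOnNhd ℂ t U)
    {p : ℂ × ℂ} (hp : p ∈ U) (v w : ℂ × ℂ) :
    fderiv ℂ (fun q => fderiv ℂ t q v) p w = fderiv ℂ (fderiv ℂ t) p w v := by
  rw [fderiv_clm_apply ((ht p hp).fderiv.differentiableAt) (differentiableAt_const v)]
  simp

private lemma G_symm {U : Set (ℂ × ℂ)} (hUo : IsOpen U) {t : ℂ × ℂ → ℂ}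
    (ht : AnalyticOnNhd ℂ t U) (htne : ∀ q ∈ U, t q ≠ 0) {p : ℂ × ℂ} (hp : p ∈ U) :
    Dq2 (G1 t) p = Dq1 (G2 t) p := by
  have htd : DifferentiableAt ℂ t p := (ht p hp).differentiableAt
  have htne' : t (p.1, p.2) ≠ 0 := by rw [Prod.mk.eta]; exact htne p hp
  have hsymm : ∀ v w, fderiv ℂ (fderiv ℂ t) p v w = fderiv ℂ (fderiv ℂ t) p w v :=
    ((ht p hp).contDiffAt (n := 2)).isSymmSndFDerivAt (by simp)
  have hP1 := P1_diffAt ht hp ((1 : ℂ), (0 : ℂ))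
  have hP2 := P1_diffAt ht hp ((0 : ℂ), (1 : ℂ))
  -- left side
  have h1 : Dq2 (G1 t) p
      = Dq2 (fun q => q.1 * fderiv ℂ t q (1, 0) / t q) p := Dq2_congr (G1_eventuallyEq hUo ht hp)
  have h2 : Dq1 (G2 t) p
      = Dq1 (fun q => q.2 * fderiv ℂ t q (0, 1) / t q) p := Dq1_congr (G2_eventuallyEq hUo ht hp)
  rw [h1, h2,
    Dq2_div (f := fun q : ℂ × ℂ => q.1 * fderiv ℂ t q (1, 0)) ((differentiableAt_fst (𝕜 := ℂ)).mul hP1) htd (htne p hp),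
    Dq1_div (f := fun q : ℂ × ℂ => q.2 * fderiv ℂ t q (0, 1)) ((differentiableAt_snd (𝕜 := ℂ)).mul hP2) htd (htne p hp)]
  have e1 : Dq2 (fun q : ℂ × ℂ => q.1 * fderiv ℂ t q (1, 0)) p
      = p.1 * (p.2 * fderiv ℂ (fderiv ℂ t) p (0, 1) (1, 0)) := by
    have h := ((hasDerivAt_const p.2 p.1).mul (slice2_hasDerivAt_s1 hP1)).deriv
    unfold Dq2
    erw [h]; rw [fderiv_P ht hp, Prod.mk.eta]
    ring
  have e2 : Dq1 (fun q : ℂ × ℂ => q.2 * fderiv ℂ t q (0, 1)) p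
      = p.2 * (p.1 * fderiv ℂ (fderiv ℂ t) p (1, 0) (0, 1)) := by
    have h := ((hasDerivAt_const p.1 p.2).mul (slice1_hasDerivAt_s1 hP2)).deriv
    unfold Dq1
    erw [h]; rw [fderiv_P ht hp, Prod.mk.eta]
    ring
  rw [e1, e2, dq1_eq htd, dq2_eq htd, hsymm (0, 1) (1, 0)]
  ring
private lemma comb3 (T Fp NY dNY1 dNY2 dT1 dT2 b a : ℂ) (hT : T ≠ 0) :
    Fp * NY ^ 2 / T ^ 2 + Fp / T *
        (-b * ((dNY1 * T - NY * dT1) / T ^ 2) + a * ((dNY2 * T - NY * dT2) / T ^ 2))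
      = (Fp * NY ^ 2 * T + Fp * (-b * (dNY1 * T - NY * dT1) + a * (dNY2 * T - NY * dT2)))
          / T ^ 3 := by
  have h1 : Fp / T * (-b * ((dNY1 * T - NY * dT1) / T ^ 2) + a * ((dNY2 * T - NY * dT2) / T ^ 2))
      = Fp * (-b * (dNY1 * T - NY * dT1) + a * (dNY2 * T - NY * dT2)) / T ^ 3 := by
    field_simp
  rw [h1]
  field_simp

private lemma comb2 (T S Fp NX NY dNX1 dNX2 dT1 dT2 b a : ℂ) (hT : T ≠ 0) (hS : S ≠ 0) :
    2 * a * b / S * (Fp * NX * NY / T ^ 2 + Fp / T *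
        (-b * ((dNX1 * T - NX * dT1) / T ^ 2) + a * ((dNX2 * T - NX * dT2) / T ^ 2)))
      = 2 * a * b * (Fp * NX * NY * T + Fp * (-b * (dNX1 * T - NX * dT1)
          + a * (dNX2 * T - NX * dT2))) / (S * T ^ 3) := by
  have h1 : Fp / T * (-b * ((dNX1 * T - NX * dT1) / T ^ 2) + a * ((dNX2 * T - NX * dT2) / T ^ 2))
      = Fp * (-b * (dNX1 * T - NX * dT1) + a * (dNX2 * T - NX * dT2)) / T ^ 3 := by
    field_simp
  rw [h1]
  field_simp

private lemma comb1 (num den T S Fp NX : ℂ) (hden : den = T * S) :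
    num / den * (Fp * NX / T) = num * (Fp * NX) / (T ^ 2 * S) := by
  rw [hden, div_mul_div_comm, show T * S * T = T ^ 2 * S from by ring]

private lemma comb0 (num den T S Fp : ℂ) (hden : den = T * S) :
    -(num / den) * Fp = -(num * Fp) / (T * S) := by
  rw [hden, neg_mul, div_mul_eq_mul_div, neg_div]

private lemma combine (T S A B C D E : ℂ) (hT : T ≠ 0) (hS : S ≠ 0)
    (h : S * A + B + C * T + D * T + E * T ^ 2 = 0) :
    A / T ^ 3 + B / (S * T ^ 3) + C / (T ^ 2 * S) + D / (T ^ 2 * S) + E / (T * S) = 0 := by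
  have k1 : A / T ^ 3 + B / (S * T ^ 3) = (S * A + B) / (S * T ^ 3) := by
    field_simp
  have k2 : (S * A + B) / (S * T ^ 3) + C / (T ^ 2 * S) = (S * A + B + C * T) / (S * T ^ 3) := by
    field_simp
  have k3 : (S * A + B + C * T) / (S * T ^ 3) + D / (T ^ 2 * S)
      = (S * A + B + C * T + D * T) / (S * T ^ 3) := by
    field_simp
  have k4 : (S * A + B + C * T + D * T) / (S * T ^ 3) + E / (T * S)
      = (S * A + B + C * T + D * T + E * T ^ 2) / (S * T ^ 3) := by
    field_simp
  rw [k1, k2, k3, k4, h, zero_div]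

theorem stmt1
    (U : Set (ℂ × ℂ)) (hUopen : IsOpen U)
    (hU : ∀ p ∈ U, p.1 ≠ 0 ∧ p.2 ≠ 0)
    (F x y : ℂ × ℂ → ℂ)
    (hF : AnalyticOnNhd ℂ F U) (hx : AnalyticOnNhd ℂ x U) (hy : AnalyticOnNhd ℂ y U)
    (hFne : ∀ p ∈ U, F p ≠ 0) (hxne : ∀ p ∈ U, x p ≠ 0) (hyne : ∀ p ∈ U, y p ≠ 0)
    (hΔ : ∀ p ∈ U, Del x y p ≠ 0)
    (hden : ∀ p ∈ U, (G1 x p) ^ 2 * (G2 y p) ^ 2 - (G1 y p) ^ 2 * (G2 x p) ^ 2 ≠ 0) :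
    ∀ p ∈ U,
      DYY F x y p
      + (2 * G1 x p * G2 x p / (G1 x p * G2 y p + G1 y p * G2 x p)) * DXY F x y p
      + ((-((G2 x p) ^ 2) * (Dq1 (G1 x) p - 2 * G1 F p * G1 x p)
          + (G1 x p) ^ 2 * (Dq2 (G2 x) p - 2 * G2 F p * G2 x p)) /
          ((G1 x p) ^ 2 * (G2 y p) ^ 2 - (G1 y p) ^ 2 * (G2 x p) ^ 2)) * DX F x y p
      + ((-((G2 x p) ^ 2) * (Dq1 (G1 y) p - 2 * G1 F p * G1 y p)
          + (G1 x p) ^ 2 * (Dq2 (G2 y) p - 2 * G2 F p * G2 y p)) /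
          ((G1 x p) ^ 2 * (G2 y p) ^ 2 - (G1 y p) ^ 2 * (G2 x p) ^ 2)) * DY F x y p
      + (-((-((G2 x p) ^ 2) * (Dq1 (G1 F) p - (G1 F p) ^ 2)
          + (G1 x p) ^ 2 * (Dq2 (G2 F) p - (G2 F p) ^ 2)) /
          ((G1 x p) ^ 2 * (G2 y p) ^ 2 - (G1 y p) ^ 2 * (G2 x p) ^ 2))) * F p = 0 := by
  intro p hp
  have hG1x := G1_diffAt hUopen hx hxne hp
  have hG2x := G2_diffAt hUopen hx hxne hp
  have hG1y := G1_diffAt hUopen hy hyne hp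
  have hG2y := G2_diffAt hUopen hy hyne hp
  have hG1F := G1_diffAt hUopen hF hFne hp
  have hG2F := G2_diffAt hUopen hF hFne hp
  have hDel : DifferentiableAt ℂ (Del x y) p := (hG1x.mul hG2y).sub (hG2x.mul hG1y)
  have hDelX : DifferentiableAt ℂ (DelX F y) p := (hG1F.mul hG2y).sub (hG2F.mul hG1y)
  have hDelY : DifferentiableAt ℂ (DelY F x) p := ((hG2x.mul hG1F).neg).add (hG1x.mul hG2F)
  have hTne : G1 x p * G2 y p - G2 x p * G1 y p ≠ 0 := hΔ p hp
  have r1 : Dq1 (RX F x y) p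
      = (Dq1 (DelX F y) p * Del x y p - DelX F y p * Dq1 (Del x y) p) / Del x y p ^ 2 :=
    Dq1_div hDelX hDel (hΔ p hp)
  have r2 : Dq2 (RX F x y) p
      = (Dq2 (DelX F y) p * Del x y p - DelX F y p * Dq2 (Del x y) p) / Del x y p ^ 2 :=
    Dq2_div hDelX hDel (hΔ p hp)
  have r3 : Dq1 (RY F x y) p
      = (Dq1 (DelY F x) p * Del x y p - DelY F x p * Dq1 (Del x y) p) / Del x y p ^ 2 :=
    Dq1_div hDelY hDel (hΔ p hp)
  have r4 : Dq2 (RY F x y) p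
      = (Dq2 (DelY F x) p * Del x y p - DelY F x p * Dq2 (Del x y) p) / Del x y p ^ 2 :=
    Dq2_div hDelY hDel (hΔ p hp)
  have e1 : Dq1 (Del x y) p
      = (Dq1 (G1 x) p * G2 y p + G1 x p * Dq1 (G2 y) p)
        - (Dq1 (G2 x) p * G1 y p + G2 x p * Dq1 (G1 y) p) :=
    Dq1_delx hG1x hG2y hG2x hG1y
  have e2 : Dq2 (Del x y) p
      = (Dq2 (G1 x) p * G2 y p + G1 x p * Dq2 (G2 y) p)
        - (Dq2 (G2 x) p * G1 y p + G2 x p * Dq2 (G1 y) p) :=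
    Dq2_delx hG1x hG2y hG2x hG1y
  have e3 : Dq1 (DelX F y) p
      = (Dq1 (G1 F) p * G2 y p + G1 F p * Dq1 (G2 y) p)
        - (Dq1 (G2 F) p * G1 y p + G2 F p * Dq1 (G1 y) p) :=
    Dq1_delx hG1F hG2y hG2F hG1y
  have e4 : Dq2 (DelX F y) p
      = (Dq2 (G1 F) p * G2 y p + G1 F p * Dq2 (G2 y) p)
        - (Dq2 (G2 F) p * G1 y p + G2 F p * Dq2 (G1 y) p) :=
    Dq2_delx hG1F hG2y hG2F hG1y
  have e5 : Dq1 (DelY F x) p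
      = -(Dq1 (G2 x) p * G1 F p + G2 x p * Dq1 (G1 F) p)
        + (Dq1 (G1 x) p * G2 F p + G1 x p * Dq1 (G2 F) p) :=
    Dq1_dely hG2x hG1F hG1x hG2F
  have e6 : Dq2 (DelY F x) p
      = -(Dq2 (G2 x) p * G1 F p + G2 x p * Dq2 (G1 F) p)
        + (Dq2 (G1 x) p * G2 F p + G1 x p * Dq2 (G2 F) p) :=
    Dq2_dely hG2x hG1F hG1x hG2F
  have sx := G_symm hUopen hx hxne hp
  have sy := G_symm hUopen hy hyne hp
  have sF := G_symm hUopen hF hFne hp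
  rw [sx, sy] at e2
  rw [sF, sy] at e4
  rw [sx, sF] at e6
  rw [e3, e1] at r1
  rw [e4, e2] at r2
  rw [e5, e1] at r3
  rw [e6, e2] at r4
  have hFp := hFne p hp
  have hT0 : Del x y p ≠ 0 := hΔ p hp
  have hS : G1 x p * G2 y p + G1 y p * G2 x p ≠ 0 := by
    intro h0
    apply hden p hp
    have hTne : G1 x p * G2 y p - G2 x p * G1 y p ≠ 0 := hΔ p hp
    have hfac : G1 x p ^ 2 * G2 y p ^ 2 - G1 y p ^ 2 * G2 x p ^ 2
        = (G1 x p * G2 y p - G2 x p * G1 y p) * (G1 x p * G2 y p + G1 y p * G2 x p) := by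
      ring
    rw [hfac, h0, mul_zero]
  have hdeq : G1 x p ^ 2 * G2 y p ^ 2 - G1 y p ^ 2 * G2 x p ^ 2
      = Del x y p * (G1 x p * G2 y p + G1 y p * G2 x p) := by
    simp only [Del]; ring
  simp only [DYY, DXY, DX, DY]
  rw [r1, r2, r3, r4]
  rw [comb3 (Del x y p) (F p) (DelY F x p) _ _ _ _ (G2 x p) (G1 x p) hT0]
  rw [comb2 (Del x y p) _ (F p) (DelX F y p) (DelY F x p) _ _ _ _ (G2 x p) (G1 x p) hT0 hS]
  rw [comb1 _ _ _ _ _ _ hdeq]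
  rw [comb1 _ _ _ _ _ _ hdeq]
  rw [comb0 _ _ _ _ _ hdeq]
  exact combine (Del x y p) (G1 x p * G2 y p + G1 y p * G2 x p) _ _ _ _ _ hT0 hS
    (by simp only [DelX, DelY, Del]; ring)
end

section
/- Let Ω ⊆ ℂ be open and connected, let p₁, p₂ be holomorphic on Ω, and let f, f₁ be holomorphic solutions on Ω of h'' + p₁h' + p₂h = 0 with f nonvanishing. Set τ = f₁/f and suppose τ'(t₀) ≠ 0 at t₀ ∈ Ω, so that τ has a holomorphic local inverse φ near τ₀ = τ(t₀) with φ(τ₀) = t₀. Then 2·Q(t₀)·φ'(τ₀)² + {φ, τ}(τ₀) = 0, where Q = (4p₂ − 2p₁' − p₁²)/4 and {φ, τ} = φ'''/φ' − (3/2)(φ''/φ')² is the Schwarzian derivative of φ evaluated at τ₀. -/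
open Complex Filter

private lemma analyticAt_deriv' {f : ℂ → ℂ} {x : ℂ} (hf : AnalyticAt ℂ f x) :
    AnalyticAt ℂ (deriv f) x := by
  have h := hf.eventually_analyticAt
  rw [Filter.eventually_iff_exists_mem] at h
  obtain ⟨s, hsmem, hs⟩ := h
  exact AnalyticOnNhd.deriv (fun y hy => hs y hy) x (mem_of_mem_nhds hsmem)

theorem stmt7 (Ω : Set ℂ) (hΩopen : IsOpen Ω) (hΩconn : IsConnected Ω)
    (p₁ p₂ f f₁ : ℂ → ℂ)
    (hp₁ : AnalyticOnNhd ℂ p₁ Ω) (hp₂ : AnalyticOnNhd ℂ p₂ Ω)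
    (hf : AnalyticOnNhd ℂ f Ω) (hf₁ : AnalyticOnNhd ℂ f₁ Ω)
    (hode : ∀ t ∈ Ω, deriv (deriv f) t + p₁ t * deriv f t + p₂ t * f t = 0)
    (hode₁ : ∀ t ∈ Ω, deriv (deriv f₁) t + p₁ t * deriv f₁ t + p₂ t * f₁ t = 0)
    (hfne : ∀ t ∈ Ω, f t ≠ 0)
    (t₀ : ℂ) (ht₀ : t₀ ∈ Ω)
    (hτ' : deriv (fun t => f₁ t / f t) t₀ ≠ 0)
    (φ : ℂ → ℂ)
    (hφ : AnalyticAt ℂ φ (f₁ t₀ / f t₀))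
    (hφ0 : φ (f₁ t₀ / f t₀) = t₀)
    (hφmem : ∀ᶠ w in nhds (f₁ t₀ / f t₀), φ w ∈ Ω)
    (hφinv : ∀ᶠ w in nhds (f₁ t₀ / f t₀), f₁ (φ w) / f (φ w) = w) :
    2 * ((4 * p₂ t₀ - 2 * deriv p₁ t₀ - (p₁ t₀) ^ 2) / 4) *
        (deriv φ (f₁ t₀ / f t₀)) ^ 2
      + (deriv (deriv (deriv φ)) (f₁ t₀ / f t₀) / deriv φ (f₁ t₀ / f t₀)
          - (3 / 2) * (deriv (deriv φ) (f₁ t₀ / f t₀) / deriv φ (f₁ t₀ / f t₀)) ^ 2)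
      = 0 := by
  set τ : ℂ → ℂ := fun t => f₁ t / f t with hτdef
  set w₀ : ℂ := f₁ t₀ / f t₀ with hw₀
  have hτΩ : AnalyticOnNhd ℂ τ Ω := fun t ht => (hf₁ t ht).div (hf t ht) (hfne t ht)
  set W : ℂ → ℂ := fun t => deriv f₁ t * f t - f₁ t * deriv f t with hWdef
  have hWΩ : AnalyticOnNhd ℂ W Ω := fun t ht =>
    (((hf₁.deriv t ht).mul (hf t ht)).sub ((hf₁ t ht).mul (hf.deriv t ht)))
  -- first derivative of τ on Ω
  have hd1 : ∀ t ∈ Ω, deriv τ t = W t / f t ^ 2 := by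
    intro t ht
    rw [hτdef, deriv_fun_div ((hf₁ t ht).differentiableAt) ((hf t ht).differentiableAt) (hfne t ht)]
  -- derivative of W on Ω
  have hdW : ∀ t ∈ Ω, deriv W t = -(p₁ t * W t) := by
    intro t ht
    have h1 : deriv W t = (deriv (deriv f₁) t * f t + deriv f₁ t * deriv f t)
        - (deriv f₁ t * deriv f t + f₁ t * deriv (deriv f) t) := by
      rw [hWdef]
      rw [deriv_fun_sub (f := fun t => deriv f₁ t * f t) (g := fun t => f₁ t * deriv f t)
        (((hf₁.deriv t ht).mul (hf t ht)).differentiableAt)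
        (((hf₁ t ht).mul (hf.deriv t ht)).differentiableAt)]
      rw [deriv_fun_mul ((hf₁.deriv t ht).differentiableAt) ((hf t ht).differentiableAt)]
      rw [deriv_fun_mul ((hf₁ t ht).differentiableAt) ((hf.deriv t ht).differentiableAt)]
    rw [h1, hWdef]
    have e1 := hode t ht
    have e2 := hode₁ t ht
    linear_combination f t * e2 - f₁ t * e1
  have hd1ev : ∀ t ∈ Ω, deriv τ =ᶠ[nhds t] fun s => W s / f s ^ 2 := by
    intro t ht
    filter_upwards [hΩopen.mem_nhds ht] with s hs using hd1 s hs
  have hsq : ∀ t ∈ Ω, deriv (fun s => f s ^ 2) t = 2 * f t * deriv f t := by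
    intro t ht
    have : deriv (fun s => f s ^ 2) t = ((2:ℕ):ℂ) * f t ^ (2-1) * deriv f t :=
      deriv_pow ((hf t ht).differentiableAt) 2
    simpa [mul_comm, mul_assoc] using this
  -- second derivative of τ on Ω
  have hd2 : ∀ t ∈ Ω, deriv (deriv τ) t
      = (deriv W t * f t ^ 2 - W t * (2 * f t * deriv f t)) / (f t ^ 2) ^ 2 := by
    intro t ht
    rw [(hd1ev t ht).deriv_eq]
    rw [deriv_fun_div (d := fun s => f s ^ 2) ((hWΩ t ht).differentiableAt)
      (((hf t ht).pow 2).differentiableAt) (pow_ne_zero 2 (hfne t ht)), hsq t ht]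
  -- third derivative of τ at t₀
  have hfd : DifferentiableAt ℂ f t₀ := (hf t₀ ht₀).differentiableAt
  have hfd' : DifferentiableAt ℂ (deriv f) t₀ := (hf.deriv t₀ ht₀).differentiableAt
  have hWd : DifferentiableAt ℂ W t₀ := (hWΩ t₀ ht₀).differentiableAt
  have hWd' : DifferentiableAt ℂ (deriv W) t₀ := (hWΩ.deriv t₀ ht₀).differentiableAt
  have hF := hfne t₀ ht₀
  have hd3 : deriv (deriv (deriv τ)) t₀ =
      ((deriv (deriv W) t₀ * f t₀ ^ 2 + deriv W t₀ * (2 * f t₀ * deriv f t₀)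
          - (deriv W t₀ * (2 * f t₀ * deriv f t₀)
            + W t₀ * (2 * deriv f t₀ * deriv f t₀ + 2 * f t₀ * deriv (deriv f) t₀)))
          * (f t₀ ^ 2) ^ 2
        - (deriv W t₀ * f t₀ ^ 2 - W t₀ * (2 * f t₀ * deriv f t₀))
          * (2 * (f t₀ ^ 2) * (2 * f t₀ * deriv f t₀)))
        / ((f t₀ ^ 2) ^ 2) ^ 2 := by
    have hev : deriv (deriv τ) =ᶠ[nhds t₀]
        fun t => (deriv W t * f t ^ 2 - W t * (2 * f t * deriv f t)) / (f t ^ 2) ^ 2 := by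
      filter_upwards [hΩopen.mem_nhds ht₀] with s hs using hd2 s hs
    rw [hev.deriv_eq]
    have h2ff' : DifferentiableAt ℂ (fun t => 2 * f t * deriv f t) t₀ :=
      ((differentiableAt_const (2:ℂ)).mul hfd).mul hfd'
    have hnum : DifferentiableAt ℂ
        (fun t => deriv W t * f t ^ 2 - W t * (2 * f t * deriv f t)) t₀ :=
      (hWd'.mul (hfd.pow 2)).sub (hWd.mul h2ff')
    have hden : DifferentiableAt ℂ (fun t => (f t ^ 2) ^ 2) t₀ := (hfd.pow 2).pow 2
    rw [deriv_fun_div hnum hden (pow_ne_zero 2 (pow_ne_zero 2 hF))]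
    have hdden : deriv (fun t => (f t ^ 2) ^ 2) t₀ = 2 * (f t₀ ^ 2) * (2 * f t₀ * deriv f t₀) := by
      have : deriv (fun t => (f t ^ 2) ^ 2) t₀
          = ((2:ℕ):ℂ) * (f t₀ ^ 2) ^ (2-1) * deriv (fun t => f t ^ 2) t₀ :=
        deriv_pow (hfd.pow 2) 2
      rw [this, hsq t₀ ht₀]
      ring
    have hdnum : deriv (fun t => deriv W t * f t ^ 2 - W t * (2 * f t * deriv f t)) t₀
        = deriv (deriv W) t₀ * f t₀ ^ 2 + deriv W t₀ * (2 * f t₀ * deriv f t₀)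
          - (deriv W t₀ * (2 * f t₀ * deriv f t₀)
            + W t₀ * (2 * deriv f t₀ * deriv f t₀ + 2 * f t₀ * deriv (deriv f) t₀)) := by
      rw [deriv_fun_sub (f := fun t => deriv W t * f t ^ 2)
        (g := fun t => W t * (2 * f t * deriv f t)) (hWd'.mul (hfd.pow 2)) (hWd.mul h2ff')]
      rw [deriv_fun_mul (d := fun t => f t ^ 2) hWd' (hfd.pow 2), hsq t₀ ht₀]
      rw [deriv_fun_mul hWd h2ff']
      have : deriv (fun t => 2 * f t * deriv f t) t₀
          = 2 * deriv f t₀ * deriv f t₀ + 2 * f t₀ * deriv (deriv f) t₀ := by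
        rw [deriv_fun_mul (c := fun t => 2 * f t) ((differentiableAt_const (2:ℂ)).mul hfd) hfd']
        rw [deriv_const_mul 2 hfd]
      rw [this]
    rw [hdnum, hdden]
  -- second derivative of W at t₀
  have hd2W : deriv (deriv W) t₀ = -(deriv p₁ t₀ * W t₀ + p₁ t₀ * deriv W t₀) := by
    have hev : deriv W =ᶠ[nhds t₀] fun s => -(p₁ s * W s) := by
      filter_upwards [hΩopen.mem_nhds ht₀] with s hs using hdW s hs
    rw [hev.deriv_eq, deriv.fun_neg, deriv_fun_mul ((hp₁ t₀ ht₀).differentiableAt) hWd]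
  have hf'' : deriv (deriv f) t₀ = -(p₁ t₀ * deriv f t₀ + p₂ t₀ * f t₀) := by
    linear_combination hode t₀ ht₀
  -- the key Schwarzian identity for τ
  have key3 : 2 * deriv (deriv (deriv τ)) t₀ * deriv τ t₀ - 3 * (deriv (deriv τ) t₀) ^ 2
      = (4 * p₂ t₀ - 2 * deriv p₁ t₀ - p₁ t₀ ^ 2) * (deriv τ t₀) ^ 2 := by
    rw [hd3, hd2 t₀ ht₀, hd1 t₀ ht₀, hd2W, hdW t₀ ht₀, hf'']
    field_simp
    ring
  -- chain rule identities for the inverse function φ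
  have hφa : ∀ᶠ w in nhds w₀, AnalyticAt ℂ φ w := hφ.eventually_analyticAt
  have hid : (fun w => τ (φ w)) =ᶠ[nhds w₀] fun w => w := by
    filter_upwards [hφinv] with w hw using hw
  have hc1 : (fun w => deriv τ (φ w) * deriv φ w) =ᶠ[nhds w₀] fun _ => 1 := by
    filter_upwards [hid.deriv, hφa, hφmem] with w hdw hφw hmw
    have : deriv (fun y => τ (φ y)) w = deriv τ (φ w) * deriv φ w :=
      deriv_comp w ((hτΩ (φ w) hmw).differentiableAt) hφw.differentiableAt
    rw [← this, hdw]
    simp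
  have hc1val : deriv τ t₀ * deriv φ w₀ = 1 := by
    have h := hc1.self_of_nhds
    simp only [] at h
    rwa [hφ0] at h
  have hc2 : (fun w => deriv (deriv τ) (φ w) * deriv φ w * deriv φ w
      + deriv τ (φ w) * deriv (deriv φ) w) =ᶠ[nhds w₀] fun _ => 0 := by
    filter_upwards [hc1.deriv, hφa, hφmem] with w hdw hφw hmw
    have hD1 : DifferentiableAt ℂ (fun y => deriv τ (φ y)) w :=
      DifferentiableAt.comp w ((hτΩ.deriv (φ w) hmw).differentiableAt)
        hφw.differentiableAt
    have hD2 : DifferentiableAt ℂ (deriv φ) w := (analyticAt_deriv' hφw).differentiableAt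
    have e1 : deriv (fun y => deriv τ (φ y) * deriv φ y) w
        = deriv (fun y => deriv τ (φ y)) w * deriv φ w + deriv τ (φ w) * deriv (deriv φ) w :=
      deriv_mul hD1 hD2
    have e2 : deriv (fun y => deriv τ (φ y)) w = deriv (deriv τ) (φ w) * deriv φ w :=
      deriv_comp w ((hτΩ.deriv (φ w) hmw).differentiableAt) hφw.differentiableAt
    have e3 : deriv (fun y => deriv τ (φ y) * deriv φ y) w = 0 := by
      rw [hdw]; simp
    rw [← e2, ← e1, e3]
  have hc2val : deriv (deriv τ) t₀ * deriv φ w₀ ^ 2 + deriv τ t₀ * deriv (deriv φ) w₀ = 0 := by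
    have h := hc2.self_of_nhds
    simp only [] at h
    rw [hφ0] at h
    linear_combination h
  -- third-order chain identity
  have hφd : DifferentiableAt ℂ φ w₀ := hφ.differentiableAt
  have hφd1 : DifferentiableAt ℂ (deriv φ) w₀ := (analyticAt_deriv' hφ).differentiableAt
  have hφd2 : DifferentiableAt ℂ (deriv (deriv φ)) w₀ :=
    (analyticAt_deriv' (analyticAt_deriv' hφ)).differentiableAt
  have hτd1 : DifferentiableAt ℂ (deriv τ) (φ w₀) := by
    rw [hφ0]; exact (hτΩ.deriv t₀ ht₀).differentiableAt
  have hτd2 : DifferentiableAt ℂ (deriv (deriv τ)) (φ w₀) := by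
    rw [hφ0]; exact ((hτΩ.deriv).deriv t₀ ht₀).differentiableAt
  have hc3 : deriv (deriv (deriv τ)) t₀ * deriv φ w₀ ^ 3
      + 3 * deriv (deriv τ) t₀ * deriv φ w₀ * deriv (deriv φ) w₀
      + deriv τ t₀ * deriv (deriv (deriv φ)) w₀ = 0 := by
    have hzero : deriv (fun w => deriv (deriv τ) (φ w) * deriv φ w * deriv φ w
        + deriv τ (φ w) * deriv (deriv φ) w) w₀ = 0 := by
      rw [hc2.deriv_eq]; simp
    have hD1 : DifferentiableAt ℂ (fun y => deriv (deriv τ) (φ y)) w₀ :=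
      DifferentiableAt.comp w₀ hτd2 hφd
    have hD0 : DifferentiableAt ℂ (fun y => deriv τ (φ y)) w₀ :=
      DifferentiableAt.comp w₀ hτd1 hφd
    have e0 : deriv (fun y => deriv τ (φ y)) w₀ = deriv (deriv τ) (φ w₀) * deriv φ w₀ :=
      deriv_comp w₀ hτd1 hφd
    have e1 : deriv (fun y => deriv (deriv τ) (φ y)) w₀
        = deriv (deriv (deriv τ)) (φ w₀) * deriv φ w₀ :=
      deriv_comp w₀ hτd2 hφd
    have e2 : deriv (fun y => deriv (deriv τ) (φ y) * deriv φ y * deriv φ y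
        + deriv τ (φ y) * deriv (deriv φ) y) w₀
        = (deriv (fun y => deriv (deriv τ) (φ y)) w₀ * deriv φ w₀
            + deriv (deriv τ) (φ w₀) * deriv (deriv φ) w₀) * deriv φ w₀
          + deriv (deriv τ) (φ w₀) * deriv φ w₀ * deriv (deriv φ) w₀
          + (deriv (fun y => deriv τ (φ y)) w₀ * deriv (deriv φ) w₀
            + deriv τ (φ w₀) * deriv (deriv (deriv φ)) w₀) := by
      rw [deriv_fun_add (f := fun y => deriv (deriv τ) (φ y) * deriv φ y * deriv φ y)
        (g := fun y => deriv τ (φ y) * deriv (deriv φ) y) ((hD1.mul hφd1).mul hφd1) (hD0.mul hφd2)]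
      rw [deriv_fun_mul (c := fun y => deriv (deriv τ) (φ y) * deriv φ y) (hD1.mul hφd1) hφd1]
      rw [deriv_fun_mul hD1 hφd1]
      rw [deriv_fun_mul hD0 hφd2]
    rw [e2, e0, e1, hφ0] at hzero
    linear_combination hzero
  -- finish by algebra
  have ha : deriv φ w₀ ≠ 0 := by
    intro h
    rw [h, mul_zero] at hc1val
    exact one_ne_zero hc1val.symm
  have hA : deriv τ t₀ ≠ 0 := hτ'
  have hb : deriv (deriv φ) w₀ = -(deriv (deriv τ) t₀ * deriv φ w₀ ^ 3) := by
    linear_combination deriv φ w₀ * hc2val - deriv (deriv φ) w₀ * hc1val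
  have hcv : deriv (deriv (deriv φ)) w₀
      = -(deriv (deriv (deriv τ)) t₀ * deriv φ w₀ ^ 4)
        + 3 * (deriv (deriv τ) t₀) ^ 2 * deriv φ w₀ ^ 5 := by
    linear_combination deriv φ w₀ * hc3 - 3 * deriv (deriv τ) t₀ * deriv φ w₀ ^ 2 * hb
      - deriv (deriv (deriv φ)) w₀ * hc1val
  rw [hb, hcv]
  field_simp
  linear_combination (-4 * deriv φ w₀ ^ 4) * key3
    - 4 * deriv φ w₀ ^ 2
      * ((4 * p₂ t₀ - 2 * deriv p₁ t₀ - p₁ t₀ ^ 2) * (1 + deriv φ w₀ * deriv τ t₀)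
        - 2 * deriv φ w₀ * deriv (deriv (deriv τ)) t₀) * hc1val
end
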